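/- Each of the ideals Q_{ij} (2 ≤ j < i ≤ n) and I_{ij} (3 ≤ j < i ≤ n) of S is prime, and the annihilator ideals satisfy Ann_S(𝔅_n') = ⋂_{2 ≤ j < i ≤ n} Q_{ij} and Ann_S(K_n) = ⋂_{3 ≤ j < i ≤ n} I_{ij}; in particular both annihilators are radical ideals. -/
import Mathlib


/-- Index set for the variables `x_{ij}` (`1 ≤ j < i ≤ n`, `0`-indexed). -/
abbrev PIdx (n : ℕ) := { p : Fin n × Fin n // p.2 < p.1 }

/-- The polynomial ring `S = ℂ[x_{ij} : j < i]`. -/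
abbrev Sn (n : ℕ) := MvPolynomial (PIdx n) ℂ

/-- Index set for the basis `r_{ijk}` (`k < j < i`). -/
abbrev TIdx (n : ℕ) := { t : Fin n × Fin n × Fin n // t.2.2 < t.2.1 ∧ t.2.1 < t.1 }

/-- The free `S`-module `F` with basis `{r_{ijk} : k < j < i}`. -/
abbrev Fn (n : ℕ) := TIdx n → Sn n

/-- The variable `x_{ij}` (for `j < i`). -/
noncomputable def Xv (n : ℕ) (i j : Fin n) (h : j < i) : Sn n := MvPolynomial.X ⟨(i, j), h⟩

/-- The basis element `r_{ijk}` of `F` (for `k < j < i`). -/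
noncomputable def rGen (n : ℕ) (i j k : Fin n) (h1 : k < j) (h2 : j < i) : Fn n :=
  Pi.single ⟨(i, j, k), h1, h2⟩ 1

/-- The generating set `B = ∪ B_{ijk}` of relations (`g₁,…,g₄, h₁,…,h₈` of the paper):
for each `k < j < i` and admissible `l₁ < k < l₂ < j < l₃ < i < l₄` and pairs `t < s`
with `{s,t} ∩ {i,j,k} = ∅`. -/
noncomputable def BSet (n : ℕ) : Set (Fn n) :=
  { w | ∃ (i j k : Fin n) (hkj : k < j) (hji : j < i),
    -- g₁
    (∃ (l : Fin n) (h1 : k < l) (h2 : l < j),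
      w = (-Xv n j k hkj - Xv n l k h1) • rGen n i j l h2 hji
          + Xv n j l h2 • rGen n i j k hkj hji) ∨
    -- g₂
    (∃ (l : Fin n) (_h1 : k < l) (h2 : l < j),
      w = Xv n j k hkj • rGen n i j l h2 hji
          + Xv n i l (h2.trans hji) • rGen n i j k hkj hji) ∨
    -- g₃
    (∃ (l : Fin n) (h1 : j < l) (h2 : l < i),
      w = -(Xv n j k hkj • rGen n i l j h1 h2)
          + Xv n i l h2 • rGen n i j k hkj hji) ∨
    -- g₄
    (∃ (l : Fin n) (h1 : i < l),
      w = Xv n j k hkj • rGen n l i j hji h1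
          + Xv n l i h1 • rGen n i j k hkj hji) ∨
    -- h₁
    (∃ (l : Fin n) (h1 : l < k),
      w = (Xv n i l (h1.trans (hkj.trans hji)) + Xv n j l (h1.trans hkj) + Xv n k l h1) •
          rGen n i j k hkj hji) ∨
    -- h₂
    (w = (Xv n i k (hkj.trans hji) + Xv n j k hkj) • rGen n i j k hkj hji) ∨
    -- h₃
    (∃ (l : Fin n) (h1 : k < l) (_h2 : l < j), w = Xv n l k h1 • rGen n i j k hkj hji) ∨
    -- h₄
    (∃ (l : Fin n) (h1 : j < l) (_h2 : l < i),
      w = Xv n l k (hkj.trans h1) • rGen n i j k hkj hji) ∨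
    -- h₅
    (∃ (l : Fin n) (h1 : j < l) (_h2 : l < i), w = Xv n l j h1 • rGen n i j k hkj hji) ∨
    -- h₆
    (∃ (l : Fin n) (h1 : i < l),
      w = Xv n l k ((hkj.trans hji).trans h1) • rGen n i j k hkj hji) ∨
    -- h₇
    (∃ (l : Fin n) (h1 : i < l), w = Xv n l j (hji.trans h1) • rGen n i j k hkj hji) ∨
    -- h₈
    (∃ (s t : Fin n) (h : t < s), s ≠ i ∧ s ≠ j ∧ s ≠ k ∧ t ≠ i ∧ t ≠ j ∧ t ≠ k ∧
      w = Xv n s t h • rGen n i j k hkj hji) }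

/-- The `S`-submodule of `F` spanned by `B`. -/
noncomputable def spanB (n : ℕ) : Submodule (Sn n) (Fn n) := Submodule.span (Sn n) (BSet n)

/-- The infinitesimal Alexander invariant `𝔅ₙ = F / span_S(B)` of `PΣₙ⁺`. -/
abbrev Bn (n : ℕ) := Fn n ⧸ spanB n

/-- The extra monomial generators `E = { x_{kp}·r_{ijk} : p < k < j < i }`. -/
noncomputable def ESet (n : ℕ) : Set (Fn n) :=
  { w | ∃ (i j k : Fin n) (hkj : k < j) (hji : j < i) (p : Fin n) (hp : p < k),
      w = Xv n k p hp • rGen n i j k hkj hji }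

/-- The `S`-submodule of `F` spanned by `B ∪ E`. -/
noncomputable def spanB' (n : ℕ) : Submodule (Sn n) (Fn n) :=
  Submodule.span (Sn n) (BSet n ∪ ESet n)

/-- The quotient module `𝔅ₙ' = F / span_S(B ∪ E)`. -/
abbrev Bn' (n : ℕ) := Fn n ⧸ spanB' n

/-- Index set for the basis `e_{ijkl}` (`l < k < j < i`). -/
abbrev QIdx (n : ℕ) :=
  { q : Fin n × Fin n × Fin n × Fin n //
      q.2.2.2 < q.2.2.1 ∧ q.2.2.1 < q.2.1 ∧ q.2.1 < q.1 }

/-- The free `S`-module `F'` with basis `{e_{ijkl} : l < k < j < i}`. -/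
abbrev F'n (n : ℕ) := QIdx n → Sn n

/-- The basis element `e_{ijkl}` of `F'`. -/
noncomputable def eGen (n : ℕ) (i j k l : Fin n) (h1 : l < k) (h2 : k < j) (h3 : j < i) :
    F'n n :=
  Pi.single ⟨(i, j, k, l), h1, h2, h3⟩ 1

/-- The generating set `{ x_{st}·e_{ijkl} : t < s, (s,t) ≠ (i,j) }`. -/
noncomputable def JSet (n : ℕ) : Set (F'n n) :=
  { w | ∃ (i j k l : Fin n) (h1 : l < k) (h2 : k < j) (h3 : j < i)
      (s t : Fin n) (hts : t < s), (s, t) ≠ (i, j) ∧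
      w = Xv n s t hts • eGen n i j k l h1 h2 h3 }

/-- The `S`-submodule of `F'` spanned by the set above. -/
noncomputable def spanJ (n : ℕ) : Submodule (Sn n) (F'n n) := Submodule.span (Sn n) (JSet n)

/-- The module `Kₙ = F' / span_S{x_{st}·e_{ijkl} : (s,t) ≠ (i,j)}`. -/
abbrev Kn (n : ℕ) := F'n n ⧸ spanJ n

/-- The prime ideal `Q_{ij}` generated by the linear forms `x_{il} + x_{jl}` (`l < j`),
`x_{il}` (`j < l < i`), and `x_{st}` (`t < s`, `s ∉ {i,j}`). -/
noncomputable def Qideal (n : ℕ) (i j : Fin n) (hji : j < i) : Ideal (Sn n) :=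
  Ideal.span { p |
    (∃ (l : Fin n) (h : l < j), p = Xv n i l (h.trans hji) + Xv n j l h) ∨
    (∃ (l : Fin n) (_h1 : j < l) (h2 : l < i), p = Xv n i l h2) ∨
    (∃ (s t : Fin n) (h : t < s), s ≠ i ∧ s ≠ j ∧ p = Xv n s t h) }

/-- The prime ideal `I_{ij}` generated by all the variables `x_{st}` with
`(s,t) ≠ (i,j)`. -/
noncomputable def Iideal (n : ℕ) (i j : Fin n) : Ideal (Sn n) :=
  Ideal.span { p | ∃ (s t : Fin n) (h : t < s), (s, t) ≠ (i, j) ∧ p = Xv n s t h }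

noncomputable def phiQ (n : ℕ) (i j : Fin n) (hji : j < i) : Sn n →ₐ[ℂ] Sn n :=
  MvPolynomial.aeval fun v =>
    if v.1.1 = i then (if v.1.2 ≤ j then MvPolynomial.X v else 0)
    else if h : v.1.1 = j then -MvPolynomial.X ⟨(i, v.1.2), (v.2.trans_eq h).trans hji⟩
    else 0

variable {n : ℕ}

lemma phiQ_X_i_le {i j l : Fin n} (hji : j < i) (hlj : l ≤ j) (h2 : l < i) :
    phiQ n i j hji (Xv n i l h2) = Xv n i l h2 := by
  simp [phiQ, Xv, hlj]

lemma phiQ_X_i_gt {i j l : Fin n} (hji : j < i) (hjl : j < l) (h2 : l < i) :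
    phiQ n i j hji (Xv n i l h2) = 0 := by
  simp [phiQ, Xv, not_le.mpr hjl]

lemma phiQ_X_j {i j l : Fin n} (hji : j < i) (hlj : l < j) :
    phiQ n i j hji (Xv n j l hlj) = -Xv n i l (hlj.trans hji) := by
  simp [phiQ, Xv, hji.ne, Xv]

lemma phiQ_X_ne {i j s t : Fin n} (hji : j < i) (hsi : s ≠ i) (hsj : s ≠ j) (h : t < s) :
    phiQ n i j hji (Xv n s t h) = 0 := by
  simp [phiQ, Xv, hsi, hsj]

lemma sub_phiQ_mem (i j : Fin n) (hji : j < i) (q : Sn n) :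
    q - phiQ n i j hji q ∈ Qideal n i j hji := by
  have hx : ∀ v : PIdx n,
      (MvPolynomial.X v : Sn n) - phiQ n i j hji (MvPolynomial.X v) ∈ Qideal n i j hji := by
    rintro ⟨⟨s, t⟩, hts⟩
    by_cases hsi : s = i
    · subst hsi
      rcases le_or_gt t j with h | h
      · rw [show (MvPolynomial.X ⟨(s, t), hts⟩ : Sn n) = Xv n s t hts from rfl,
          phiQ_X_i_le hji h hts, sub_self]
        exact Ideal.zero_mem _
      · rw [show (MvPolynomial.X ⟨(s, t), hts⟩ : Sn n) = Xv n s t hts from rfl,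
          phiQ_X_i_gt hji h hts, sub_zero]
        exact Ideal.subset_span (Or.inr (Or.inl ⟨t, h, hts, rfl⟩))
    · by_cases hsj : s = j
      · subst hsj
        rw [show (MvPolynomial.X ⟨(s, t), hts⟩ : Sn n) = Xv n s t hts from rfl,
          phiQ_X_j hji hts, sub_neg_eq_add, add_comm]
        exact Ideal.subset_span (Or.inl ⟨t, hts, rfl⟩)
      · rw [show (MvPolynomial.X ⟨(s, t), hts⟩ : Sn n) = Xv n s t hts from rfl,
          phiQ_X_ne hji hsi hsj hts, sub_zero]
        exact Ideal.subset_span (Or.inr (Or.inr ⟨s, t, hts, hsi, hsj, rfl⟩))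
  induction q using MvPolynomial.induction_on with
  | C a =>
      simp only [phiQ, MvPolynomial.aeval_C, MvPolynomial.algebraMap_eq, sub_self]
      exact Ideal.zero_mem _
  | add p q hp hq =>
      rw [map_add, add_sub_add_comm]
      exact Ideal.add_mem _ hp hq
  | mul_X p v ih =>
      have : p * MvPolynomial.X v - phiQ n i j hji (p * MvPolynomial.X v)
          = p * (MvPolynomial.X v - phiQ n i j hji (MvPolynomial.X v))
            + (p - phiQ n i j hji p) * phiQ n i j hji (MvPolynomial.X v) := by
        rw [map_mul]; ring
      rw [this]
      exact Ideal.add_mem _ (Ideal.mul_mem_left _ _ (hx v)) (Ideal.mul_mem_right _ _ ih)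

lemma Q_eq_ker (i j : Fin n) (hji : j < i) :
    Qideal n i j hji = RingHom.ker (phiQ n i j hji) := by
  apply le_antisymm
  · rw [Qideal, Ideal.span_le]
    rintro p (⟨l, h, rfl⟩ | ⟨l, h1, h2, rfl⟩ | ⟨s, t, h, hsi, hsj, rfl⟩)
    · simp [RingHom.mem_ker, map_add, phiQ_X_i_le hji h.le, phiQ_X_j hji h]
    · simp [RingHom.mem_ker, phiQ_X_i_gt hji h1]
    · simp [RingHom.mem_ker, phiQ_X_ne hji hsi hsj]
  · intro p hp
    rw [RingHom.mem_ker] at hp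
    have := sub_phiQ_mem i j hji p
    rwa [hp, sub_zero] at this

lemma Q_isPrime (i j : Fin n) (hji : j < i) : (Qideal n i j hji).IsPrime := by
  rw [Q_eq_ker i j hji]
  exact RingHom.ker_isPrime _

lemma Xv_notMem_Q {i j k : Fin n} (hji : j < i) (hkj : k < j) :
    Xv n i k (hkj.trans hji) ∉ Qideal n i j hji := by
  rw [Q_eq_ker i j hji, RingHom.mem_ker, phiQ_X_i_le hji hkj.le]
  exact MvPolynomial.X_ne_zero _

noncomputable def phiI (n : ℕ) (i j : Fin n) (hji : j < i) : Sn n →ₐ[ℂ] Sn n :=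
  MvPolynomial.aeval fun v => if v = ⟨(i, j), hji⟩ then MvPolynomial.X v else 0

lemma phiI_X_self (i j : Fin n) (hji : j < i) :
    phiI n i j hji (Xv n i j hji) = Xv n i j hji := by
  simp [phiI, Xv]

lemma phiI_X_ne {i j s t : Fin n} (hji : j < i) (h : t < s) (hne : (s, t) ≠ (i, j)) :
    phiI n i j hji (Xv n s t h) = 0 := by
  simp [phiI, Xv, hne]

lemma I_eq_ker (i j : Fin n) (hji : j < i) :
    Iideal n i j = RingHom.ker (phiI n i j hji) := by
  have hx : ∀ v : PIdx n,
      (MvPolynomial.X v : Sn n) - phiI n i j hji (MvPolynomial.X v) ∈ Iideal n i j := by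
    rintro ⟨⟨s, t⟩, hts⟩
    by_cases hv : (s, t) = (i, j)
    · rw [show (MvPolynomial.X ⟨(s, t), hts⟩ : Sn n) = Xv n s t hts from rfl]
      obtain ⟨rfl, rfl⟩ := Prod.mk.injEq .. ▸ hv
      · rw [phiI_X_self, sub_self]
        exact Ideal.zero_mem _
    · rw [show (MvPolynomial.X ⟨(s, t), hts⟩ : Sn n) = Xv n s t hts from rfl,
        phiI_X_ne hji hts hv, sub_zero]
      exact Ideal.subset_span ⟨s, t, hts, hv, rfl⟩
  apply le_antisymm
  · rw [Iideal, Ideal.span_le]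
    rintro p ⟨s, t, h, hne, rfl⟩
    simp [RingHom.mem_ker, phiI_X_ne hji h hne]
  · intro p hp
    rw [RingHom.mem_ker] at hp
    have key : ∀ q : Sn n, q - phiI n i j hji q ∈ Iideal n i j := by
      intro q
      induction q using MvPolynomial.induction_on with
      | C a =>
          simp only [phiI, MvPolynomial.aeval_C, MvPolynomial.algebraMap_eq, sub_self]
          exact Ideal.zero_mem _
      | add p q hp hq =>
          rw [map_add, add_sub_add_comm]
          exact Ideal.add_mem _ hp hq
      | mul_X p v ih =>
          have : p * MvPolynomial.X v - phiI n i j hji (p * MvPolynomial.X v)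
              = p * (MvPolynomial.X v - phiI n i j hji (MvPolynomial.X v))
                + (p - phiI n i j hji p) * phiI n i j hji (MvPolynomial.X v) := by
            rw [map_mul]; ring
          rw [this]
          exact Ideal.add_mem _ (Ideal.mul_mem_left _ _ (hx v)) (Ideal.mul_mem_right _ _ ih)
    have := key p
    rwa [hp, sub_zero] at this

lemma I_isPrime (i j : Fin n) (hji : j < i) : (Iideal n i j).IsPrime := by
  rw [I_eq_ker i j hji]
  exact RingHom.ker_isPrime _

noncomputable def lamF (n : ℕ) (c : TIdx n → Sn n) : Fn n →ₗ[Sn n] Sn n where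
  toFun f := ∑ t, c t * f t
  map_add' f g := by simp [mul_add, Finset.sum_add_distrib]
  map_smul' r f := by simp [Finset.mul_sum, smul_eq_mul, mul_left_comm]

lemma lamF_smul_rGen (c : TIdx n → Sn n) (a : Sn n) (i j k : Fin n) (h1 : k < j) (h2 : j < i) :
    lamF n c (a • rGen n i j k h1 h2) = a * c ⟨(i, j, k), h1, h2⟩ := by
  show (∑ t, c t * (a • rGen n i j k h1 h2) t) = _
  rw [Finset.sum_eq_single (⟨(i, j, k), h1, h2⟩ : TIdx n)]
  · simp [rGen, Pi.single_apply, smul_eq_mul]; ring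
  · intro b _ hb
    simp [rGen, Pi.single_apply, hb.symm, smul_eq_mul]
  · intro h; exact absurd (Finset.mem_univ _) h

noncomputable def cQ (n : ℕ) (i j : Fin n) (hji : j < i) : TIdx n → Sn n := fun t =>
  if h : t.1.1 = i ∧ t.1.2.1 = j then
    Xv n i t.1.2.2 ((t.2.1.trans_eq h.2).trans hji) else 0

lemma cQ_eq {i j : Fin n} (hji : j < i) {K : Fin n} {h : K < j ∧ j < i} :
    cQ n i j hji ⟨(i, j, K), h⟩ = Xv n i K (h.1.trans hji) :=
  dif_pos ⟨rfl, rfl⟩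

lemma cQ_ne {i j : Fin n} (hji : j < i) {I J K : Fin n} {h : K < J ∧ J < I}
    (hne : ¬(I = i ∧ J = j)) : cQ n i j hji ⟨(I, J, K), h⟩ = 0 :=
  dif_neg hne

lemma mem_Q_of_phi {i j : Fin n} (hji : j < i) {p : Sn n}
    (h : phiQ n i j hji p = 0) : p ∈ Qideal n i j hji := by
  rw [Q_eq_ker i j hji]; exact h

lemma lamB_mem (i j : Fin n) (hji : j < i) :
    ∀ w ∈ BSet n ∪ ESet n, lamF n (cQ n i j hji) w ∈ Qideal n i j hji := by
  rintro w (⟨I, J, K, hKJ, hJI, hcase⟩ | ⟨I, J, K, hKJ, hJI, p, hp, rfl⟩)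
  case inr =>
    rw [lamF_smul_rGen]
    by_cases hP : I = i ∧ J = j
    · obtain ⟨rfl, rfl⟩ := hP
      rw [cQ_eq]
      apply mem_Q_of_phi hji
      rw [map_mul, phiQ_X_ne hji (ne_of_lt (hKJ.trans hji)) (ne_of_lt hKJ) hp, zero_mul]
    · rw [cQ_ne hji hP, mul_zero]; exact Ideal.zero_mem _
  rcases hcase with ⟨l, h1, h2, rfl⟩ | ⟨l, h1, h2, rfl⟩ | ⟨l, h1, h2, rfl⟩ | ⟨l, h1, rfl⟩ |
    ⟨l, h1, rfl⟩ | rfl | ⟨l, h1, h2, rfl⟩ | ⟨l, h1, h2, rfl⟩ | ⟨l, h1, h2, rfl⟩ |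
    ⟨l, h1, rfl⟩ | ⟨l, h1, rfl⟩ | ⟨s, t, h, hsi, hsj, hsk, hti, htj, htk, rfl⟩
  -- g1
  · rw [map_add, lamF_smul_rGen, lamF_smul_rGen]
    by_cases hP : I = i ∧ J = j
    · obtain ⟨rfl, rfl⟩ := hP
      rw [cQ_eq, cQ_eq]
      apply mem_Q_of_phi hji
      rw [map_add, map_mul, map_mul, map_sub, map_neg,
        phiQ_X_j hji hKJ, phiQ_X_ne hji (ne_of_lt (h2.trans hji)) (ne_of_lt h2) h1,
        phiQ_X_i_le hji h2.le, phiQ_X_j hji h2, phiQ_X_i_le hji hKJ.le]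
      ring
    · rw [cQ_ne hji hP, cQ_ne hji hP, mul_zero, mul_zero, add_zero]
      exact Ideal.zero_mem _
  -- g2
  · rw [map_add, lamF_smul_rGen, lamF_smul_rGen]
    by_cases hP : I = i ∧ J = j
    · obtain ⟨rfl, rfl⟩ := hP
      rw [cQ_eq, cQ_eq]
      apply mem_Q_of_phi hji
      rw [map_add, map_mul, map_mul, phiQ_X_j hji hKJ, phiQ_X_i_le hji h2.le,
        phiQ_X_i_le hji hKJ.le]
      ring
    · rw [cQ_ne hji hP, cQ_ne hji hP, mul_zero, mul_zero, add_zero]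
      exact Ideal.zero_mem _
  -- g3
  · rw [map_add, map_neg, lamF_smul_rGen, lamF_smul_rGen]
    by_cases hP2 : I = i ∧ J = j
    · obtain ⟨rfl, rfl⟩ := hP2
      rw [cQ_ne hji (fun hq => absurd hq.2 (ne_of_gt h1)), cQ_eq,
        mul_zero, neg_zero, zero_add]
      apply mem_Q_of_phi hji
      rw [map_mul, phiQ_X_i_gt hji h1 h2, zero_mul]
    · by_cases hP1 : I = i ∧ l = j
      · obtain ⟨rfl, rfl⟩ := hP1
        rw [cQ_eq, cQ_ne hji hP2, mul_zero, add_zero]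
        apply mem_Q_of_phi hji
        rw [map_neg, map_mul,
          phiQ_X_ne hji (ne_of_lt (h1.trans hji)) (ne_of_lt h1) hKJ, zero_mul, neg_zero]
      · rw [cQ_ne hji hP1, cQ_ne hji hP2, mul_zero, mul_zero,
          neg_zero, zero_add]
        exact Ideal.zero_mem _
  -- g4
  · rw [map_add, lamF_smul_rGen, lamF_smul_rGen]
    by_cases hP2 : I = i ∧ J = j
    · obtain ⟨rfl, rfl⟩ := hP2
      rw [cQ_ne hji (fun hq => absurd hq.1 (ne_of_gt h1)), cQ_eq,
        mul_zero, zero_add]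
      apply mem_Q_of_phi hji
      rw [map_mul, phiQ_X_ne hji (ne_of_gt h1) (ne_of_gt (hji.trans h1)) h1, zero_mul]
    · by_cases hP1 : l = i ∧ I = j
      · obtain ⟨rfl, rfl⟩ := hP1
        rw [cQ_eq, cQ_ne hji hP2, mul_zero, add_zero]
        apply mem_Q_of_phi hji
        rw [map_mul,
          phiQ_X_ne hji (ne_of_lt (hJI.trans h1)) (ne_of_lt hJI) hKJ, zero_mul]
      · rw [cQ_ne hji hP1, cQ_ne hji hP2, mul_zero, mul_zero, add_zero]
        exact Ideal.zero_mem _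
  -- h1
  · rw [lamF_smul_rGen]
    by_cases hP : I = i ∧ J = j
    · obtain ⟨rfl, rfl⟩ := hP
      rw [cQ_eq]
      apply mem_Q_of_phi hji
      rw [map_mul, map_add, map_add, phiQ_X_i_le hji (h1.trans hKJ).le,
        phiQ_X_j hji (h1.trans hKJ),
        phiQ_X_ne hji (ne_of_lt (hKJ.trans hji)) (ne_of_lt hKJ) h1]
      ring
    · rw [cQ_ne hji hP, mul_zero]; exact Ideal.zero_mem _
  -- h2
  · rw [lamF_smul_rGen]
    by_cases hP : I = i ∧ J = j
    · obtain ⟨rfl, rfl⟩ := hP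
      rw [cQ_eq]
      apply mem_Q_of_phi hji
      rw [map_mul, map_add, phiQ_X_i_le hji hKJ.le, phiQ_X_j hji hKJ]
      ring
    · rw [cQ_ne hji hP, mul_zero]; exact Ideal.zero_mem _
  -- h3
  · rw [lamF_smul_rGen]
    by_cases hP : I = i ∧ J = j
    · obtain ⟨rfl, rfl⟩ := hP
      rw [cQ_eq]
      apply mem_Q_of_phi hji
      rw [map_mul, phiQ_X_ne hji (ne_of_lt (h2.trans hji)) (ne_of_lt h2) h1, zero_mul]
    · rw [cQ_ne hji hP, mul_zero]; exact Ideal.zero_mem _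
  -- h4
  · rw [lamF_smul_rGen]
    by_cases hP : I = i ∧ J = j
    · obtain ⟨rfl, rfl⟩ := hP
      rw [cQ_eq]
      apply mem_Q_of_phi hji
      rw [map_mul, phiQ_X_ne hji (ne_of_lt h2) (ne_of_gt h1) (hKJ.trans h1), zero_mul]
    · rw [cQ_ne hji hP, mul_zero]; exact Ideal.zero_mem _
  -- h5
  · rw [lamF_smul_rGen]
    by_cases hP : I = i ∧ J = j
    · obtain ⟨rfl, rfl⟩ := hP
      rw [cQ_eq]
      apply mem_Q_of_phi hji
      rw [map_mul, phiQ_X_ne hji (ne_of_lt h2) (ne_of_gt h1) h1, zero_mul]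
    · rw [cQ_ne hji hP, mul_zero]; exact Ideal.zero_mem _
  -- h6
  · rw [lamF_smul_rGen]
    by_cases hP : I = i ∧ J = j
    · obtain ⟨rfl, rfl⟩ := hP
      rw [cQ_eq]
      apply mem_Q_of_phi hji
      rw [map_mul, phiQ_X_ne hji (ne_of_gt h1) (ne_of_gt (hji.trans h1))
        ((hKJ.trans hji).trans h1), zero_mul]
    · rw [cQ_ne hji hP, mul_zero]; exact Ideal.zero_mem _
  -- h7
  · rw [lamF_smul_rGen]
    by_cases hP : I = i ∧ J = j
    · obtain ⟨rfl, rfl⟩ := hP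
      rw [cQ_eq]
      apply mem_Q_of_phi hji
      rw [map_mul, phiQ_X_ne hji (ne_of_gt h1) (ne_of_gt (hji.trans h1)) (hji.trans h1),
        zero_mul]
    · rw [cQ_ne hji hP, mul_zero]; exact Ideal.zero_mem _
  -- h8
  · rw [lamF_smul_rGen]
    by_cases hP : I = i ∧ J = j
    · obtain ⟨rfl, rfl⟩ := hP
      rw [cQ_eq]
      apply mem_Q_of_phi hji
      rw [map_mul, phiQ_X_ne hji hsi hsj h, zero_mul]
    · rw [cQ_ne hji hP, mul_zero]; exact Ideal.zero_mem _

lemma Q_smul_rGen_mem (i j k : Fin n) (hkj : k < j) (hji : j < i) (p : Sn n)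
    (hp : p ∈ Qideal n i j hji) : p • rGen n i j k hkj hji ∈ spanB' n := by
  induction hp using Submodule.span_induction with
  | zero => rw [zero_smul]; exact Submodule.zero_mem _
  | add x y hx hy ihx ihy => rw [add_smul]; exact Submodule.add_mem _ ihx ihy
  | smul a x hx ih => rw [smul_eq_mul, mul_smul]; exact Submodule.smul_mem _ _ ih
  | mem p hmem =>
    rcases hmem with ⟨l, hl, rfl⟩ | ⟨l, h1, h2, rfl⟩ | ⟨s, t, h, hsi, hsj, rfl⟩
    · -- x_{il} + x_{jl}, l < j
      rcases lt_trichotomy l k with hlk | rfl | hkl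
      · have hB : (Xv n i l ((hlk.trans hkj).trans hji) + Xv n j l (hlk.trans hkj)
            + Xv n k l hlk) • rGen n i j k hkj hji ∈ spanB' n :=
          Submodule.subset_span (Or.inl ⟨i, j, k, hkj, hji, Or.inr (Or.inr (Or.inr (Or.inr
            (Or.inl ⟨l, hlk, rfl⟩))))⟩)
        have hE : Xv n k l hlk • rGen n i j k hkj hji ∈ spanB' n :=
          Submodule.subset_span (Or.inr ⟨i, j, k, hkj, hji, l, hlk, rfl⟩)
        have heq : (Xv n i l (hl.trans hji) + Xv n j l hl) • rGen n i j k hkj hji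
            = (Xv n i l ((hlk.trans hkj).trans hji) + Xv n j l (hlk.trans hkj)
              + Xv n k l hlk) • rGen n i j k hkj hji
              - Xv n k l hlk • rGen n i j k hkj hji := by
          module
        rw [heq]; exact Submodule.sub_mem _ hB hE
      · exact Submodule.subset_span (Or.inl ⟨i, j, l, hkj, hji,
          Or.inr (Or.inr (Or.inr (Or.inr (Or.inr (Or.inl rfl)))))⟩)
      · have hg1 : ((-Xv n j k hkj - Xv n l k hkl) • rGen n i j l hl hji
            + Xv n j l hl • rGen n i j k hkj hji) ∈ spanB' n :=
          Submodule.subset_span (Or.inl ⟨i, j, k, hkj, hji, Or.inl ⟨l, hkl, hl, rfl⟩⟩)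
        have hg2 : (Xv n j k hkj • rGen n i j l hl hji
            + Xv n i l (hl.trans hji) • rGen n i j k hkj hji) ∈ spanB' n :=
          Submodule.subset_span (Or.inl ⟨i, j, k, hkj, hji, Or.inr (Or.inl ⟨l, hkl, hl, rfl⟩)⟩)
        have hE : Xv n l k hkl • rGen n i j l hl hji ∈ spanB' n :=
          Submodule.subset_span (Or.inr ⟨i, j, l, hl, hji, k, hkl, rfl⟩)
        have heq : (Xv n i l (hl.trans hji) + Xv n j l hl) • rGen n i j k hkj hji
            = ((-Xv n j k hkj - Xv n l k hkl) • rGen n i j l hl hji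
               + Xv n j l hl • rGen n i j k hkj hji)
              + (Xv n j k hkj • rGen n i j l hl hji
               + Xv n i l (hl.trans hji) • rGen n i j k hkj hji)
              + Xv n l k hkl • rGen n i j l hl hji := by
          module
        rw [heq]
        exact Submodule.add_mem _ (Submodule.add_mem _ hg1 hg2) hE
    · -- x_{il}, j < l < i
      have hg3 : (-(Xv n j k hkj • rGen n i l j h1 h2)
          + Xv n i l h2 • rGen n i j k hkj hji) ∈ spanB' n :=
        Submodule.subset_span (Or.inl ⟨i, j, k, hkj, hji,
          Or.inr (Or.inr (Or.inl ⟨l, h1, h2, rfl⟩))⟩)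
      have hE : Xv n j k hkj • rGen n i l j h1 h2 ∈ spanB' n :=
        Submodule.subset_span (Or.inr ⟨i, l, j, h1, h2, k, hkj, rfl⟩)
      have heq : Xv n i l h2 • rGen n i j k hkj hji
          = (-(Xv n j k hkj • rGen n i l j h1 h2)
             + Xv n i l h2 • rGen n i j k hkj hji)
            + Xv n j k hkj • rGen n i l j h1 h2 := by
        module
      rw [heq]; exact Submodule.add_mem _ hg3 hE
    · -- x_{st}, s ∉ {i, j}
      by_cases hsk : s = k
      · subst hsk
        exact Submodule.subset_span (Or.inr ⟨i, j, s, hkj, hji, t, h, rfl⟩)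
      · by_cases hti : t = i
        · subst hti
          have hg4 : (Xv n j k hkj • rGen n s t j hji h
              + Xv n s t h • rGen n t j k hkj hji) ∈ spanB' n :=
            Submodule.subset_span (Or.inl ⟨t, j, k, hkj, hji,
              Or.inr (Or.inr (Or.inr (Or.inl ⟨s, h, rfl⟩)))⟩)
          have hE : Xv n j k hkj • rGen n s t j hji h ∈ spanB' n :=
            Submodule.subset_span (Or.inr ⟨s, t, j, hji, h, k, hkj, rfl⟩)
          have heq : Xv n s t h • rGen n t j k hkj hji
              = (Xv n j k hkj • rGen n s t j hji h
                + Xv n s t h • rGen n t j k hkj hji)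
                - Xv n j k hkj • rGen n s t j hji h := by
            module
          rw [heq]; exact Submodule.sub_mem _ hg4 hE
        · by_cases htj : t = j
          · subst htj
            rcases lt_or_gt_of_ne hsi with hslt | hsgt
            · exact Submodule.subset_span (Or.inl ⟨i, t, k, hkj, hji,
                Or.inr (Or.inr (Or.inr (Or.inr (Or.inr (Or.inr (Or.inr (Or.inr
                  (Or.inl ⟨s, h, hslt, rfl⟩))))))))⟩)
            · exact Submodule.subset_span (Or.inl ⟨i, t, k, hkj, hji,
                Or.inr (Or.inr (Or.inr (Or.inr (Or.inr (Or.inr (Or.inr (Or.inr (Or.inr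
                  (Or.inr (Or.inl ⟨s, hsgt, rfl⟩))))))))))⟩)
          · by_cases htk : t = k
            · subst htk
              rcases lt_trichotomy s j with hsj' | rfl | hsj'
              · exact Submodule.subset_span (Or.inl ⟨i, j, t, hkj, hji,
                  Or.inr (Or.inr (Or.inr (Or.inr (Or.inr (Or.inr (Or.inl
                    ⟨s, h, hsj', rfl⟩))))))⟩)
              · exact absurd rfl hsj
              · rcases lt_trichotomy s i with hsi' | rfl | hsi'
                · exact Submodule.subset_span (Or.inl ⟨i, j, t, hkj, hji,
                    Or.inr (Or.inr (Or.inr (Or.inr (Or.inr (Or.inr (Or.inr (Or.inl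
                      ⟨s, hsj', hsi', rfl⟩)))))))⟩)
                · exact absurd rfl hsi
                · exact Submodule.subset_span (Or.inl ⟨i, j, t, hkj, hji,
                    Or.inr (Or.inr (Or.inr (Or.inr (Or.inr (Or.inr (Or.inr (Or.inr (Or.inr
                      (Or.inl ⟨s, hsi', rfl⟩)))))))))⟩)
            · exact Submodule.subset_span (Or.inl ⟨i, j, k, hkj, hji,
                Or.inr (Or.inr (Or.inr (Or.inr (Or.inr (Or.inr (Or.inr (Or.inr (Or.inr
                  (Or.inr (Or.inr ⟨s, t, h, hsi, hsj, hsk, hti, htj, htk, rfl⟩))))))))))⟩)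

noncomputable def oneAt (t : TIdx n) : Fn n := Pi.single t 1
noncomputable def oneAt' (t : QIdx n) : F'n n := Pi.single t 1

lemma smul_mem_of_single {p : Sn n}
    {S : Submodule (Sn n) (Fn n)}
    (h : ∀ t : TIdx n, p • (Pi.single t (1 : Sn n) : Fn n) ∈ S) (f : Fn n) :
    p • f ∈ S := by
  have hf : f = ∑ t, Pi.single t (f t) := (Finset.univ_sum_single f).symm
  rw [hf, Finset.smul_sum]
  refine Submodule.sum_mem _ fun t _ => ?_
  have h1 : (Pi.single t (f t)) = (f t) • oneAt t := by
    funext u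
    by_cases hu : u = t
    · subst hu; simp [oneAt]
    · simp [oneAt, Pi.single_eq_of_ne hu]
  rw [h1, smul_comm]
  exact Submodule.smul_mem _ _ (h t)

lemma smul_mem_of_single' {p : Sn n}
    {S : Submodule (Sn n) (F'n n)}
    (h : ∀ t : QIdx n, p • (Pi.single t (1 : Sn n) : F'n n) ∈ S) (f : F'n n) :
    p • f ∈ S := by
  have hf : f = ∑ t, Pi.single t (f t) := (Finset.univ_sum_single f).symm
  rw [hf, Finset.smul_sum]
  refine Submodule.sum_mem _ fun t _ => ?_
  have h1 : (Pi.single t (f t)) = (f t) • oneAt' t := by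
    funext u
    by_cases hu : u = t
    · subst hu; simp [oneAt']
    · simp [oneAt', Pi.single_eq_of_ne hu]
  rw [h1, smul_comm]
  exact Submodule.smul_mem _ _ (h t)

lemma annB_eq (n : ℕ) (hn : 4 ≤ n) :
    Module.annihilator (Sn n) (Bn' n) =
      (⨅ (i : Fin n) (j : Fin n) (hji : j < i) (_ : 1 ≤ j.val), Qideal n i j hji) := by
  apply le_antisymm
  · intro p hp
    rw [Module.mem_annihilator] at hp
    simp only [Submodule.mem_iInf]
    intro i j hji hj1
    have h0 : (0 : ℕ) < n := by omega
    have hk0 : (⟨0, h0⟩ : Fin n) < j := by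
      rw [Fin.lt_def]; exact hj1
    have key := hp (Submodule.Quotient.mk (rGen n i j ⟨0, h0⟩ hk0 hji))
    rw [← Submodule.Quotient.mk_smul, Submodule.Quotient.mk_eq_zero] at key
    have hle : spanB' n ≤ Submodule.comap (lamF n (cQ n i j hji)) (Qideal n i j hji) := by
      rw [spanB', Submodule.span_le]
      intro w hw
      exact Submodule.mem_comap.mpr (lamB_mem i j hji w hw)
    have hm := hle key
    rw [Submodule.mem_comap, lamF_smul_rGen, cQ_eq hji] at hm
    rcases (Q_isPrime i j hji).mem_or_mem hm with h | h
    · exact h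
    · exact absurd h (Xv_notMem_Q hji hk0)
  · intro p hp
    simp only [Submodule.mem_iInf] at hp
    refine Module.mem_annihilator.mpr fun m => ?_
    obtain ⟨f, rfl⟩ := Submodule.Quotient.mk_surjective _ m
    rw [← Submodule.Quotient.mk_smul, Submodule.Quotient.mk_eq_zero]
    refine smul_mem_of_single (fun t => ?_) f
    obtain ⟨⟨i, j, k⟩, hkj, hji⟩ := t
    have hj1 : 1 ≤ j.val := by
      have hh : k.val < j.val := hkj
      omega
    exact Q_smul_rGen_mem i j k hkj hji p (hp i j hji hj1)

lemma annK_eq (n : ℕ) (hn : 4 ≤ n) :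
    Module.annihilator (Sn n) (Kn n) =
      (⨅ (i : Fin n) (j : Fin n) (_ : j < i) (_ : 2 ≤ j.val), Iideal n i j) := by
  apply le_antisymm
  · intro p hp
    rw [Module.mem_annihilator] at hp
    simp only [Submodule.mem_iInf]
    intro i j hji hj2
    have h0 : (0 : ℕ) < n := by omega
    have h1 : (1 : ℕ) < n := by omega
    have hlk : (⟨0, h0⟩ : Fin n) < ⟨1, h1⟩ := by
      rw [Fin.lt_def]; show (0 : ℕ) < 1; omega
    have hkj : (⟨1, h1⟩ : Fin n) < j := by
      rw [Fin.lt_def]; show (1 : ℕ) < j.val; omega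
    set q0 : QIdx n := ⟨(i, j, ⟨1, h1⟩, ⟨0, h0⟩), hlk, hkj, hji⟩ with hq0
    have key := hp (Submodule.Quotient.mk (eGen n i j ⟨1, h1⟩ ⟨0, h0⟩ hlk hkj hji))
    rw [← Submodule.Quotient.mk_smul, Submodule.Quotient.mk_eq_zero] at key
    have hle : spanJ n ≤ Submodule.comap
        (LinearMap.proj q0 : F'n n →ₗ[Sn n] Sn n) (Iideal n i j) := by
      rw [spanJ, Submodule.span_le]
      rintro w ⟨I, J, K, L, h1', h2', h3', s, t, hts, hne, rfl⟩
      refine Submodule.mem_comap.mpr ?_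
      show (Xv n s t hts • eGen n I J K L h1' h2' h3') q0 ∈ Iideal n i j
      rw [Pi.smul_apply, smul_eq_mul]
      by_cases hqq : (⟨(I, J, K, L), h1', h2', h3'⟩ : QIdx n) = q0
      · have h4 := congrArg Subtype.val hqq
        simp only [hq0, Prod.mk.injEq] at h4
        obtain ⟨hI, hJ, -, -⟩ := h4
        rw [show eGen n I J K L h1' h2' h3' q0 = 1 by
          rw [← hqq]; exact Pi.single_eq_same _ _, mul_one]
        rw [hI, hJ] at hne
        exact Ideal.subset_span ⟨s, t, hts, hne, rfl⟩
      · rw [show eGen n I J K L h1' h2' h3' q0 = 0 from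
          Pi.single_eq_of_ne (Ne.symm hqq) _, mul_zero]
        exact Ideal.zero_mem _
    have hm := hle key
    rw [Submodule.mem_comap] at hm
    have : (LinearMap.proj q0 : F'n n →ₗ[Sn n] Sn n)
        (p • eGen n i j ⟨1, h1⟩ ⟨0, h0⟩ hlk hkj hji) = p := by
      show (p • eGen n i j ⟨1, h1⟩ ⟨0, h0⟩ hlk hkj hji) q0 = p
      rw [Pi.smul_apply, smul_eq_mul, show eGen n i j ⟨1, h1⟩ ⟨0, h0⟩ hlk hkj hji q0 = 1 from
        Pi.single_eq_same _ _, mul_one]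
    rwa [this] at hm
  · intro p hp
    simp only [Submodule.mem_iInf] at hp
    refine Module.mem_annihilator.mpr fun m => ?_
    obtain ⟨f, rfl⟩ := Submodule.Quotient.mk_surjective _ m
    rw [← Submodule.Quotient.mk_smul, Submodule.Quotient.mk_eq_zero]
    refine smul_mem_of_single' (fun q => ?_) f
    obtain ⟨⟨i, j, k, l⟩, h1, h2, h3⟩ := q
    have hp' : p ∈ Iideal n i j := by
      refine hp i j h3 ?_
      have hh1 : l.val < k.val := h1
      have hh2 : k.val < j.val := h2
      omega
    clear hp
    induction hp' using Submodule.span_induction with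
    | mem x hx =>
        obtain ⟨s, t, hts, hne, rfl⟩ := hx
        exact Submodule.subset_span ⟨i, j, k, l, h1, h2, h3, s, t, hts, hne, rfl⟩
    | zero => rw [zero_smul]; exact Submodule.zero_mem _
    | add x y hx hy ihx ihy => rw [add_smul]; exact Submodule.add_mem _ ihx ihy
    | smul a x hx ih => rw [smul_eq_mul, mul_smul]; exact Submodule.smul_mem _ _ ih

theorem annihilators_radical (n : ℕ) (hn : 4 ≤ n) :
    (∀ (i j : Fin n) (hji : j < i), 1 ≤ j.val → (Qideal n i j hji).IsPrime) ∧
    (∀ (i j : Fin n), j < i → 2 ≤ j.val → (Iideal n i j).IsPrime) ∧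
    Module.annihilator (Sn n) (Bn' n) =
      (⨅ (i : Fin n) (j : Fin n) (hji : j < i) (_ : 1 ≤ j.val), Qideal n i j hji) ∧
    Module.annihilator (Sn n) (Kn n) =
      (⨅ (i : Fin n) (j : Fin n) (_ : j < i) (_ : 2 ≤ j.val), Iideal n i j) ∧
    (Module.annihilator (Sn n) (Bn' n)).IsRadical ∧
    (Module.annihilator (Sn n) (Kn n)).IsRadical := by
  refine ⟨fun i j hji _ => Q_isPrime i j hji, fun i j hji _ => I_isPrime i j hji,
    annB_eq n hn, annK_eq n hn, ?_, ?_⟩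
  · rw [annB_eq n hn]
    exact le_iInf fun i => le_iInf fun j => le_iInf fun hji => le_iInf fun hj =>
      le_trans (Ideal.radical_mono (iInf_le_of_le i (iInf_le_of_le j
        (iInf_le_of_le hji (iInf_le _ hj))))) (Q_isPrime i j hji).radical.le
  · rw [annK_eq n hn]
    exact le_iInf fun i => le_iInf fun j => le_iInf fun hji => le_iInf fun hj =>
      le_trans (Ideal.radical_mono (iInf_le_of_le i (iInf_le_of_le j
        (iInf_le_of_le hji (iInf_le _ hj))))) (I_isPrime i j hji).radical.le
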